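/- For n, l ∈ ℕ, the list chromatic number of the complete bipartite graph K_{n,l} satisfies χ_ℓ(K_{n,l}) = n + 1 if and only if l ≥ n^n. -/

import Mathlib

/-- A proper coloring of the graph `G` from the list assignment `L` (colors are
natural numbers): every vertex gets a color from its list, and adjacent vertices
get different colors. -/
def IsProperListColoring {V : Type*} (G : SimpleGraph V) (L : V → Finset ℕ) (f : V → ℕ) : Prop :=
  (∀ v, f v ∈ L v) ∧ ∀ ⦃u w⦄, G.Adj u w → f u ≠ f w

/-- `P(G, L)`: the number of proper `L`-colorings of `G`. -/
noncomputable def numListColorings {V : Type*} (G : SimpleGraph V) (L : V → Finset ℕ) : ℕ :=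
  {f : V → ℕ | IsProperListColoring G L f}.ncard

/-- `P(G, m)`: the chromatic polynomial of `G` evaluated at `m`, i.e. the number of
proper colorings of `G` using colors from `{1, …, m}`. -/
noncomputable def chromPoly {V : Type*} (G : SimpleGraph V) (m : ℕ) : ℕ :=
  numListColorings G fun _ => Finset.Icc 1 m

/-- `L` is an `m`-assignment: every list has size `m`. -/
def IsAssignment {V : Type*} (L : V → Finset ℕ) (m : ℕ) : Prop :=
  ∀ v, (L v).card = m

/-- `P_ℓ(G, m)`: the list color function, the minimum of `P(G, L)` over all
`m`-assignments `L` for `G`. -/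
noncomputable def listColorFunction {V : Type*} (G : SimpleGraph V) (m : ℕ) : ℕ :=
  sInf {p | ∃ L : V → Finset ℕ, IsAssignment L m ∧ numListColorings G L = p}

/-- `χ(G)`: the chromatic number, the least `m` admitting a proper coloring with
colors from `{1, …, m}`. -/
noncomputable def chromNum {V : Type*} (G : SimpleGraph V) : ℕ :=
  sInf {m | 0 < chromPoly G m}

/-- `χ_ℓ(G)`: the list chromatic number, the least `k` such that `G` has a proper
`L`-coloring for every `k`-assignment `L`. -/
noncomputable def listChromNum {V : Type*} (G : SimpleGraph V) : ℕ :=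
  sInf {k | ∀ L : V → Finset ℕ, IsAssignment L k → ∃ f, IsProperListColoring G L f}

/-- `τ(G)`: the list color function threshold, the least `k ≥ χ(G)` such that
`P_ℓ(G, m) = P(G, m)` whenever `m ≥ k`. -/
noncomputable def lcfThreshold {V : Type*} (G : SimpleGraph V) : ℕ :=
  sInf {k | chromNum G ≤ k ∧ ∀ m, k ≤ m → listColorFunction G m = chromPoly G m}

/-- The complete bipartite graph `K_{2,l}`. -/
def K2l (l : ℕ) : SimpleGraph (Fin 2 ⊕ Fin l) := completeBipartiteGraph (Fin 2) (Fin l)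

/-- The complete bipartite graph `K_{n,l}`. -/
def Knl (n l : ℕ) : SimpleGraph (Fin n ⊕ Fin l) := completeBipartiteGraph (Fin n) (Fin l)


noncomputable def pickc (s : Finset ℕ) : ℕ := if h : s.Nonempty then h.choose else 0

lemma pickc_mem {s : Finset ℕ} (h : s.Nonempty) : pickc s ∈ s := by
  rw [pickc, dif_pos h]; exact h.choose_spec

lemma extend_coloring {n l : ℕ} (L : (Fin n ⊕ Fin l) → Finset ℕ) (g : Fin n → ℕ)
    (hg : ∀ i, g i ∈ L (Sum.inl i))
    (hb : ∀ b, (L (Sum.inr b) \ Finset.image g Finset.univ).Nonempty) :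
    ∃ f, IsProperListColoring (Knl n l) L f := by
  refine ⟨Sum.elim g (fun b => pickc (L (Sum.inr b) \ Finset.image g Finset.univ)), ?_, ?_⟩
  · rintro (a | b)
    · exact hg a
    · exact (Finset.mem_sdiff.mp (pickc_mem (hb b))).1
  · rintro (a | b) (a' | b') h hEq
    · simp [Knl] at h
    · refine (Finset.mem_sdiff.mp (pickc_mem (hb b'))).2 ?_
      have h1 : g a = pickc (L (Sum.inr b') \ Finset.image g Finset.univ) := hEq
      rw [← h1]; exact Finset.mem_image_of_mem g (Finset.mem_univ a)
    · refine (Finset.mem_sdiff.mp (pickc_mem (hb b))).2 ?_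
      have h1 : g a' = pickc (L (Sum.inr b) \ Finset.image g Finset.univ) := hEq.symm
      rw [← h1]; exact Finset.mem_image_of_mem g (Finset.mem_univ a')
    · simp [Knl] at h

lemma works_succ (n l : ℕ) (L : (Fin n ⊕ Fin l) → Finset ℕ) (hL : IsAssignment L (n + 1)) :
    ∃ f, IsProperListColoring (Knl n l) L f := by
  apply extend_coloring L (fun a => pickc (L (Sum.inl a)))
  · intro i; exact pickc_mem (Finset.card_pos.mp (by rw [hL]; omega))
  · intro b
    have himg : (Finset.image (fun a => pickc (L (Sum.inl a))) Finset.univ).card ≤ n :=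
      Finset.card_image_le.trans (by simp)
    rw [Finset.sdiff_nonempty]
    intro hsub
    have := Finset.card_le_card hsub
    rw [hL] at this; omega

lemma works_of_lt (n l : ℕ) (hn : 1 ≤ n) (h : l < n ^ n) (L : (Fin n ⊕ Fin l) → Finset ℕ)
    (hL : IsAssignment L n) : ∃ f, IsProperListColoring (Knl n l) L f := by
  by_cases hdisj : ∀ i j : Fin n, i ≠ j → Disjoint (L (Sum.inl i)) (L (Sum.inl j))
  · set P := Fintype.piFinset (fun i : Fin n => L (Sum.inl i)) with hP
    have hPcard : P.card = n ^ n := by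
      rw [hP, Fintype.card_piFinset,
        Finset.prod_congr rfl fun i _ => hL (Sum.inl i), Finset.prod_const]
      simp
    have hinj : Set.InjOn (fun g : Fin n → ℕ => Finset.image g Finset.univ) P := by
      intro g hgP g' hg'P hEq
      rw [Finset.mem_coe, hP, Fintype.mem_piFinset] at hgP hg'P
      have hEq' : Finset.image g Finset.univ = Finset.image g' Finset.univ := hEq
      funext i
      have hmem : g i ∈ Finset.image g' Finset.univ := by
        rw [← hEq']; exact Finset.mem_image_of_mem g (Finset.mem_univ i)
      obtain ⟨j, -, hj⟩ := Finset.mem_image.mp hmem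
      by_cases hij : j = i
      · subst hij; exact hj.symm
      · exact absurd (hj ▸ hgP i) (Finset.disjoint_left.mp (hdisj j i hij) (hg'P j))
    obtain ⟨g, hgP, hgim⟩ : ∃ g ∈ P,
        Finset.image g Finset.univ ∉ Finset.image (fun b => L (Sum.inr b)) Finset.univ := by
      by_contra hc
      push_neg at hc
      have h1 := Finset.card_le_card_of_injOn _ (fun g hg => hc g hg) hinj
      have h2 : (Finset.image (fun b => L (Sum.inr b)) (Finset.univ : Finset (Fin l))).card ≤ l :=
        Finset.card_image_le.trans (by simp)
      omega
    rw [hP, Fintype.mem_piFinset] at hgP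
    apply extend_coloring L g hgP
    intro b
    rw [Finset.sdiff_nonempty]
    intro hsub
    have hcard : (Finset.image g Finset.univ).card ≤ n := Finset.card_image_le.trans (by simp)
    have heq := Finset.eq_of_subset_of_card_le hsub (by rw [hL]; exact hcard)
    exact hgim (heq ▸ Finset.mem_image_of_mem _ (Finset.mem_univ b))
  · push_neg at hdisj
    obtain ⟨i, j, hij, hnd⟩ := hdisj
    rw [Finset.not_disjoint_iff] at hnd
    obtain ⟨c, hci, hcj⟩ := hnd
    set g : Fin n → ℕ := fun k => if k = i ∨ k = j then c else pickc (L (Sum.inl k)) with hg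
    have hgmem : ∀ k, g k ∈ L (Sum.inl k) := by
      intro k
      by_cases hk : k = i ∨ k = j
      · rw [hg]; simp only [if_pos hk]
        rcases hk with rfl | rfl
        exacts [hci, hcj]
      · rw [hg]; simp only [if_neg hk]
        exact pickc_mem (Finset.card_pos.mp (by rw [hL]; omega))
    have hsub : Finset.image g Finset.univ ⊆ Finset.image g (Finset.univ.erase j) := by
      intro x hx
      obtain ⟨k, -, hk⟩ := Finset.mem_image.mp hx
      by_cases hkj : k = j
      · refine Finset.mem_image.mpr ⟨i, Finset.mem_erase.mpr ⟨hij, Finset.mem_univ i⟩, ?_⟩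
        rw [← hk, hkj, hg]; simp
      · exact Finset.mem_image.mpr ⟨k, Finset.mem_erase.mpr ⟨hkj, Finset.mem_univ k⟩, hk⟩
    have hcard : (Finset.image g Finset.univ).card ≤ n - 1 := by
      refine le_trans (Finset.card_le_card hsub) (le_trans Finset.card_image_le ?_)
      rw [Finset.card_erase_of_mem (Finset.mem_univ j)]
      simp
    apply extend_coloring L g hgmem
    intro b
    rw [Finset.sdiff_nonempty]
    intro hs
    have := Finset.card_le_card hs
    rw [hL] at this; omega

lemma bad_assignment (n l : ℕ) (hn : 1 ≤ n) (hnl : n ^ n ≤ l) :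
    ∃ L : (Fin n ⊕ Fin l) → Finset ℕ,
      IsAssignment L n ∧ ¬∃ f, IsProperListColoring (Knl n l) L f := by
  have hcard : Fintype.card (Fin n → Fin n) = n ^ n := by simp
  set e := Fintype.equivFinOfCardEq hcard with he
  have hinjval : ∀ d : Fin n → Fin n, Function.Injective (fun i : Fin n => (i : ℕ) * n + (d i : ℕ)) := by
    intro d x y hxy
    have hxy' : (x : ℕ) * n + (d x : ℕ) = (y : ℕ) * n + (d y : ℕ) := hxy
    have key : ∀ z : Fin n, ((z : ℕ) * n + (d z : ℕ)) / n = (z : ℕ) := by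
      intro z
      rw [add_comm, mul_comm, Nat.add_mul_div_left _ _ (by omega : 0 < n),
        Nat.div_eq_of_lt (d z).isLt, zero_add]
    have : (x : ℕ) = (y : ℕ) := by rw [← key x, ← key y, hxy']
    exact Fin.val_injective this
  refine ⟨fun v =>
    match v with
    | Sum.inl i => Finset.Ico ((i : ℕ) * n) ((i : ℕ) * n + n)
    | Sum.inr b =>
      if h : (b : ℕ) < n ^ n then
        Finset.image (fun i : Fin n => (i : ℕ) * n + ((e.symm ⟨(b : ℕ), h⟩) i : ℕ)) Finset.univ
      else Finset.range n, ?_, ?_⟩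
  · rintro (i | b)
    · rw [Nat.card_Ico]; omega
    · by_cases h : (b : ℕ) < n ^ n
      · simp only [dif_pos h]
        rw [Finset.card_image_of_injective _ (hinjval _)]
        simp
      · simp only [dif_neg h]
        simp
  · rintro ⟨f, hmem, hadj⟩
    have hA : ∀ i : Fin n, (i : ℕ) * n ≤ f (Sum.inl i) ∧ f (Sum.inl i) < (i : ℕ) * n + n := by
      intro i
      have := hmem (Sum.inl i)
      simpa [Finset.mem_Ico] using this
    have hfix : ∀ i : Fin n, (i : ℕ) * n + f (Sum.inl i) % n = f (Sum.inl i) := by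
      intro i
      obtain ⟨h1, h2⟩ := hA i
      obtain ⟨r, hr1, hr2⟩ : ∃ r, f (Sum.inl i) = (i : ℕ) * n + r ∧ r < n :=
        ⟨f (Sum.inl i) - (i : ℕ) * n, by omega, by omega⟩
      rw [hr1, mul_comm, Nat.mul_add_mod, Nat.mod_eq_of_lt hr2]
    set g : Fin n → Fin n := fun i => ⟨f (Sum.inl i) % n, Nat.mod_lt _ (by omega)⟩ with hgdef
    have hbl : ((e g : Fin (n ^ n)) : ℕ) < n ^ n := (e g).isLt
    set b : Fin l := ⟨((e g : Fin (n ^ n)) : ℕ), lt_of_lt_of_le hbl hnl⟩ with hbdef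
    have hmb := hmem (Sum.inr b)
    simp only [dif_pos (show (b : ℕ) < n ^ n from hbl)] at hmb
    simp only [show ∀ h, (⟨(b : ℕ), h⟩ : Fin (n ^ n)) = e g from fun _ => Fin.ext rfl, Equiv.symm_apply_apply] at hmb
    obtain ⟨i, -, hi⟩ := Finset.mem_image.mp hmb
    have : f (Sum.inl i) = f (Sum.inr b) := by
      rw [← hi]; exact (hfix i).symm
    exact hadj (by simp [Knl] : (Knl n l).Adj (Sum.inl i) (Sum.inr b)) this

/-- Folklore: for `n, l ∈ ℕ`, `χ_ℓ(K_{n,l}) = n + 1` if and only if `l ≥ nⁿ`. -/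
theorem listChromNum_completeBipartite_eq_iff (n l : ℕ) (hn : 1 ≤ n) (hl : 1 ≤ l) :
    listChromNum (Knl n l) = n + 1 ↔ n ^ n ≤ l := by
  set S : Set ℕ :=
    {k | ∀ L : (Fin n ⊕ Fin l) → Finset ℕ, IsAssignment L k →
      ∃ f, IsProperListColoring (Knl n l) L f} with hS
  have hLC : listChromNum (Knl n l) = sInf S := rfl
  have hup : ∀ k m, k ≤ m → k ∈ S → m ∈ S := by
    intro k m hkm hk L hL
    have hch : ∀ v, ∃ t ⊆ L v, t.card = k := by
      intro v
      exact Finset.exists_subset_card_eq (by rw [hL]; exact hkm)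
    choose L' hsub hcard using hch
    obtain ⟨f, hf1, hf2⟩ := hk L' hcard
    exact ⟨f, fun v => hsub v (hf1 v), hf2⟩
  have hmemS : n + 1 ∈ S := fun L hL => works_succ n l L hL
  rw [hLC]
  constructor
  · intro hEq
    by_contra hlt
    push_neg at hlt
    have hn' : n ∈ S := fun L hL => works_of_lt n l hn hlt L hL
    have := Nat.sInf_le hn'
    omega
  · intro hge
    obtain ⟨L, hL, hnc⟩ := bad_assignment n l hn hge
    have hnS : n ∉ S := fun h => hnc (h L hL)
    refine le_antisymm (Nat.sInf_le hmemS) ?_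
    refine le_csInf ⟨n + 1, hmemS⟩ ?_
    intro k hk
    by_contra hkn
    push_neg at hkn
    exact hnS (hup k n (by omega) hk)
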